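/- Let N be a matroid of rank r whose ground set is the union of two bases A and B. If there exist orderings a1...ar of A and b1...br of B such that for each i ∈ [r-1], both {a1,...,ai, b_{i+1},...,br} and {a_{i+1},...,ar, b1,...,bi} are bases, then N is cyclically orderable. -/

import Mathlib

open Set

variable {α : Type*}

/-- The rank of a set `X` in a matroid: size of a largest independent subset of `X`. -/
noncomputable def Matroid.rkSet (M : Matroid α) (X : Set α) : ℕ :=
  sSup {n | ∃ I, M.Indep I ∧ I ⊆ X ∧ I.ncard = n}

/-- The rank of a matroid. -/
noncomputable def Matroid.rank (M : Matroid α) : ℕ := M.rkSet M.E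

/-- A circuit is a minimal dependent set. -/
def Matroid.IsCircuit' (M : Matroid α) (C : Set α) : Prop :=
  M.Dep C ∧ ∀ D, D ⊂ C → M.Indep D

/-- A paving matroid: every circuit has size at least the rank. -/
def Matroid.Paving (M : Matroid α) : Prop :=
  ∀ C, M.IsCircuit' C → M.rank ≤ C.ncard

/-- Deletion of a set from a matroid. -/
noncomputable def Matroid.del (M : Matroid α) (D : Set α) : Matroid α :=
  M.restrict (M.E \ D)

/-- A cyclic ordering of a matroid, given as a list: every `M.rank`
cyclically-consecutive entries form a base. -/
def Matroid.IsCyclicOrdering (M : Matroid α) (l : List α) : Prop :=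
  l.Nodup ∧ {x | x ∈ l} = M.E ∧
    ∀ i : ℕ, M.IsBase {x | x ∈ (l.rotate i).take M.rank}


lemma setOf_mem_drop_ofFn {r j : ℕ} (f : Fin r → α) :
    {x | x ∈ (List.ofFn f).drop j} = f '' {k | j ≤ (k : ℕ)} := by
  ext x
  simp only [mem_setOf_eq, List.mem_drop_iff_getElem, List.getElem_ofFn,
    List.length_ofFn, mem_image]
  constructor
  · rintro ⟨i, hi, rfl⟩
    exact ⟨⟨j + i, by omega⟩, by simp, rfl⟩
  · rintro ⟨k, hk, rfl⟩
    refine ⟨(k : ℕ) - j, by omega, ?_⟩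
    congr 1
    exact Fin.ext (by simp; omega)

lemma setOf_mem_take_ofFn {r j : ℕ} (f : Fin r → α) :
    {x | x ∈ (List.ofFn f).take j} = f '' {k | (k : ℕ) < j} := by
  ext x
  simp only [mem_setOf_eq, List.mem_take_iff_getElem, List.getElem_ofFn,
    List.length_ofFn, mem_image]
  constructor
  · rintro ⟨i, hi, rfl⟩
    exact ⟨⟨i, by omega⟩, by simp; omega, rfl⟩
  · rintro ⟨k, hk, rfl⟩
    exact ⟨(k : ℕ), by omega, by congr 1⟩

lemma take_rotate_append {r j : ℕ} (f g : Fin r → α) (hj : j ≤ r) :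
    {x | x ∈ ((List.ofFn f ++ List.ofFn g).rotate j).take r} =
      f '' {k | j ≤ (k : ℕ)} ∪ g '' {k | (k : ℕ) < j} := by
  have hlen : j ≤ (List.ofFn f ++ List.ofFn g).length := by simp; omega
  rw [List.rotate_eq_drop_append_take hlen,
    List.drop_append_of_le_length (by simp [hj]),
    List.take_append_of_le_length (by simp [hj]),
    List.take_append,
    List.take_of_length_le (l := (List.ofFn f).drop j) (by simp)]
  have h2 : r - ((List.ofFn f).drop j).length = j := by simp; omega
  rw [h2]
  ext x
  constructor
  · intro hx
    rcases List.mem_append.mp hx with h | h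
    · exact Or.inl ((setOf_mem_drop_ofFn f) ▸ (mem_setOf_eq ▸ h : x ∈ {y | y ∈ (List.ofFn f).drop j}))
    · exact Or.inr ((setOf_mem_take_ofFn g) ▸ (h : x ∈ {y | y ∈ (List.ofFn g).take j}))
  · intro hx
    rcases hx with h | h
    · exact List.mem_append.mpr (Or.inl ((setOf_mem_drop_ofFn f) ▸ h : x ∈ {y | y ∈ (List.ofFn f).drop j}))
    · exact List.mem_append.mpr (Or.inr ((setOf_mem_take_ofFn g) ▸ h : x ∈ {y | y ∈ (List.ofFn g).take j}))

/-- Gabow's property for a matroid that is the disjoint union of two bases implies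
cyclic orderability. -/
theorem stmt19 (N : Matroid α) (A B : Set α) (hA : N.IsBase A) (hB : N.IsBase B)
    (hE : N.E = A ∪ B) (hdisj : Disjoint A B)
    (a b : Fin N.rank → α) (ha : Function.Injective a) (hb : Function.Injective b)
    (hra : Set.range a = A) (hrb : Set.range b = B)
    (hmix : ∀ i : ℕ, 1 ≤ i → i ≤ N.rank - 1 →
      N.IsBase (a '' {k | (k : ℕ) < i} ∪ b '' {k | i ≤ (k : ℕ)}) ∧
      N.IsBase (a '' {k | i ≤ (k : ℕ)} ∪ b '' {k | (k : ℕ) < i})) :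
    ∃ l : List α, N.IsCyclicOrdering l := by
  classical
  refine ⟨List.ofFn a ++ List.ofFn b, ?_, ?_, ?_⟩
  · rw [List.nodup_append]
    refine ⟨List.nodup_ofFn.mpr ha, List.nodup_ofFn.mpr hb, ?_⟩
    intro x hx y hx2
    simp only [List.mem_ofFn] at hx hx2
    exact hdisj.ne_of_mem (hra ▸ (Set.mem_range.mpr hx)) (hrb ▸ (Set.mem_range.mpr hx2))
  · ext x
    simp only [mem_setOf_eq, List.mem_append, List.mem_ofFn, hE, mem_union]
    rw [← hra, ← hrb]
    exact Iff.rfl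
  · intro i
    rcases Nat.eq_zero_or_pos N.rank with hr0 | hr0
    · have hA0 : A = ∅ := by
        rw [← hra, range_eq_empty_iff]
        exact ⟨fun k => absurd k.2 (by omega)⟩
      have ht : ((List.ofFn a ++ List.ofFn b).rotate i).take N.rank = [] :=
        by simp [hr0]
      have hempty : {x | x ∈ ((List.ofFn a ++ List.ofFn b).rotate i).take N.rank} = (∅ : Set α) := by
        rw [ht]; simp
      rw [hempty, ← hA0]; exact hA
    · have hlen : (List.ofFn a ++ List.ofFn b).length = N.rank + N.rank := by simp
      obtain ⟨j, hj⟩ : ∃ j, i % (N.rank + N.rank) = j := ⟨_, rfl⟩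
      have hjlt : j < N.rank + N.rank := hj ▸ Nat.mod_lt _ (by omega)
      have hrot : (List.ofFn a ++ List.ofFn b).rotate i
          = (List.ofFn a ++ List.ofFn b).rotate j := by
        rw [← hj, ← hlen, List.rotate_mod]
      rw [hrot]
      rcases le_or_gt j N.rank with hjr | hjr
      · rw [take_rotate_append a b hjr]
        rcases Nat.eq_zero_or_pos j with h0 | h1
        · subst h0
          have hset : a '' {k | 0 ≤ (k : ℕ)} ∪ b '' {k | (k : ℕ) < 0} = A := by
            rw [← hra]
            rw [show {k : Fin N.rank | 0 ≤ (k : ℕ)} = univ from by ext; simp,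
              show {k : Fin N.rank | (k : ℕ) < 0} = (∅ : Set (Fin N.rank)) from by ext; simp]
            simp
          rw [hset]; exact hA
        · rcases eq_or_lt_of_le hjr with hjr' | hjr'
          · subst hjr'
            have hset : a '' {k | N.rank ≤ (k : ℕ)} ∪ b '' {k | (k : ℕ) < N.rank} = B := by
              rw [← hrb]
              rw [show {k : Fin N.rank | N.rank ≤ (k : ℕ)} = (∅ : Set (Fin N.rank)) from by
                    ext k; simp,
                show {k : Fin N.rank | (k : ℕ) < N.rank} = univ from by ext k; simp [k.2]]
              simp
            rw [hset]; exact hB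
          · exact (hmix j h1 (by omega)).2
      · have hswap : (List.ofFn a ++ List.ofFn b).rotate j
            = (List.ofFn b ++ List.ofFn a).rotate (j - N.rank) := by
          have hmid : (List.ofFn a ++ List.ofFn b).rotate N.rank = List.ofFn b ++ List.ofFn a := by
            rw [List.rotate_eq_drop_append_take (by simp),
              List.drop_left' (by simp), List.take_left' (by simp)]
          calc (List.ofFn a ++ List.ofFn b).rotate j
              = ((List.ofFn a ++ List.ofFn b).rotate N.rank).rotate (j - N.rank) := by
                rw [List.rotate_rotate]; congr 1; omega
            _ = (List.ofFn b ++ List.ofFn a).rotate (j - N.rank) := by rw [hmid]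
        rw [hswap, take_rotate_append b a (by omega)]
        rw [Set.union_comm]
        exact (hmix (j - N.rank) (by omega) (by omega)).1
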